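/- (CBS-decomposition) Let p be a projection and e an effect on a complex Hilbert space H, with cosine c, sine s, off-diagonal part d := pep⊥ + p⊥ep, and b := (d²)^{1/2}. Then there exists a self-adjoint operator k ∈ B(H) with k² = 1 such that: kd = dk, d = bk = kb, e = c²p + bk + s²p⊥, and b(pk − kp⊥) = 0 (equivalently, pbk = pep⊥ and bkp = p⊥ep). -/

import Mathlib

set_option synthInstance.maxHeartbeats 1000000
set_option maxHeartbeats 1000000

open Polynomial in
/-- If `x` commutes with a selfadjoint `a` in a unital C*-algebra, it commutes with any
continuous function of `a`. -/
lemma commute_cfc_of_commute {A : Type*} [CStarAlgebra A] (a x : A)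
    (ha : IsSelfAdjoint a) (hx : Commute x a) (f : ℝ → ℝ) (hf : Continuous f) :
    Commute x (cfc f a) := by
  rw [cfc_apply f a ha hf.continuousOn]
  have hφc : Continuous (cfcHom ha (R := ℝ)) := (cfcHom_isClosedEmbedding ha).continuous
  let S : Subalgebra ℝ C(spectrum ℝ a, ℝ) :=
  { carrier := {g | Commute x (cfcHom ha g)}
    mul_mem' := by
      intro g h hg hh
      simpa [map_mul] using Commute.mul_right hg hh
    add_mem' := by
      intro g h hg hh
      simpa [map_add] using Commute.add_right hg hh
    one_mem' := by
      simp only [Set.mem_setOf_eq, map_one]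
      exact Commute.one_right x
    zero_mem' := by
      simp only [Set.mem_setOf_eq, map_zero]
      exact Commute.zero_right x
    algebraMap_mem' := by
      intro r
      simp only [Set.mem_setOf_eq, AlgHomClass.commutes]
      exact (Algebra.commutes r x).symm }
  have hXmem : (toContinuousMapOnAlgHom (spectrum ℝ a) X) ∈ S := by
    show Commute x (cfcHom ha _)
    rw [toContinuousMapOnAlgHom_apply, toContinuousMapOn_X_eq_restrict_id, cfcHom_id ha]
    exact hx
  have htop : (⊤ : Subalgebra ℝ C(spectrum ℝ a, ℝ)) ≤ S := by
    rw [← polynomialFunctions.topologicalClosure (spectrum ℝ a)]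
    refine Subalgebra.topologicalClosure_minimal ?_ ?_
    · rw [polynomialFunctions.eq_adjoin_X]
      exact Algebra.adjoin_le (by simpa using hXmem)
    · exact isClosed_eq ((continuous_mul_left x).comp hφc) ((continuous_mul_right x).comp hφc)
  have hall : ∀ g : C(spectrum ℝ a, ℝ), g ∈ S := fun g => htop (by trivial)
  exact hall _

local notation "⟪" x ", " y "⟫" => @inner ℂ _ _ x y

/-- **CBS-decomposition.** In `B(H)` with the Loewner order, let `p` be a
projection, `e` an effect, `c` the cosine and `s` the sine of `e` with respect to `p`
(encoded as the nonnegative square roots of `pep + p⊥e⊥p⊥` and `pe⊥p + p⊥ep⊥`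
respectively), let `d := pep⊥ + p⊥ep` be the off-diagonal part and `b := (d²)^{1/2}`.
Then there exists a self-adjoint `k` with `k² = 1` such that `kd = dk`, `d = bk = kb`,
`e = c²p + bk + s²p⊥`, and `b(pk − kp⊥) = 0`. -/
theorem stmt8 {H : Type*} [NormedAddCommGroup H] [InnerProductSpace ℂ H] [CompleteSpace H]
    (p e c s b : H →L[ℂ] H)
    (hp : IsSelfAdjoint p) (hp2 : p ^ 2 = p)
    (he0 : 0 ≤ e) (he1 : e ≤ 1)
    (hc0 : 0 ≤ c) (hc2 : c ^ 2 = p * e * p + (1 - p) * (1 - e) * (1 - p))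
    (hs0 : 0 ≤ s) (hs2 : s ^ 2 = p * (1 - e) * p + (1 - p) * e * (1 - p))
    (hb0 : 0 ≤ b) (hb2 : b ^ 2 = (p * e * (1 - p) + (1 - p) * e * p) ^ 2) :
    ∃ k : H →L[ℂ] H, IsSelfAdjoint k ∧ k ^ 2 = 1 ∧
      k * (p * e * (1 - p) + (1 - p) * e * p) = (p * e * (1 - p) + (1 - p) * e * p) * k ∧
      p * e * (1 - p) + (1 - p) * e * p = b * k ∧
      p * e * (1 - p) + (1 - p) * e * p = k * b ∧
      e = c ^ 2 * p + b * k + s ^ 2 * (1 - p) ∧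
      b * (p * k - k * (1 - p)) = 0 := by
  set q : H →L[ℂ] H := 1 - p with hq
  set d : H →L[ℂ] H := p * e * q + q * e * p with hd
  -- algebraic facts about the projection
  have hpp : p * p = p := by rw [← pow_two, hp2]
  have hpq : p * q = 0 := by rw [hq, mul_sub, mul_one, hpp, sub_self]
  have hqp : q * p = 0 := by rw [hq, sub_mul, one_mul, hpp, sub_self]
  have hqq : q * q = q := by rw [hq, mul_sub, mul_one, sub_mul, one_mul, hpp, sub_self, sub_zero]
  have l1 : ∀ x : H →L[ℂ] H, p * (q * x) = 0 := fun x => by rw [← mul_assoc, hpq, zero_mul]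
  have l2 : ∀ x : H →L[ℂ] H, q * (p * x) = 0 := fun x => by rw [← mul_assoc, hqp, zero_mul]
  have l3 : ∀ x : H →L[ℂ] H, p * (p * x) = p * x := fun x => by rw [← mul_assoc, hpp]
  have l4 : ∀ x : H →L[ℂ] H, q * (q * x) = q * x := fun x => by rw [← mul_assoc, hqq]
  -- selfadjointness
  have He : IsSelfAdjoint e := .of_nonneg he0
  have Hb : IsSelfAdjoint b := .of_nonneg hb0
  have Hd : IsSelfAdjoint d := by
    rw [hd, hq]
    simp only [IsSelfAdjoint, star_add, star_mul, star_sub, star_one, hp.star_eq, He.star_eq]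
    rw [add_comm, ← mul_assoc, ← mul_assoc]
  -- commutation with b via the continuous functional calculus
  have hd2nonneg : (0 : H →L[ℂ] H) ≤ d ^ 2 := by
    rw [pow_two]
    nth_rewrite 1 [← Hd.star_eq]
    exact star_mul_self_nonneg d
  have hbb : b * b = d ^ 2 := by rw [← pow_two, hb2]
  have hd2sa : IsSelfAdjoint (d ^ 2) := Hd.pow 2
  have hcfc : b = cfc (fun y : ℝ => ((y.toNNReal).sqrt : ℝ)) (d ^ 2) := by
    rw [← CFC.sqrt_unique hbb hb0, CFC.sqrt_eq_cfc, cfc_nnreal_eq_real _ _ hd2nonneg]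
  have hcont : Continuous (fun y : ℝ => ((y.toNNReal).sqrt : ℝ)) :=
    NNReal.continuous_coe.comp (NNReal.continuous_sqrt.comp continuous_real_toNNReal)
  have hcomm_db : Commute d b := by
    rw [hcfc]
    exact commute_cfc_of_commute _ _ hd2sa ((Commute.refl d).pow_right 2) _ hcont
  have hpd2 : Commute p (d ^ 2) := by
    show p * d ^ 2 = d ^ 2 * p
    rw [hd, pow_two]
    simp only [mul_add, add_mul, mul_assoc, l1, l2, l3, l4, hpq, hqp, hpp, hqq,
      mul_zero, zero_mul, add_zero, zero_add]
  have hcomm_pb : Commute p b := by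
    rw [hcfc]
    exact commute_cfc_of_commute _ _ hd2sa hpd2 _ hcont
  -- symmetric operator facts
  have symmb : ∀ x y : H, ⟪b x, y⟫ = ⟪x, b y⟫ := fun x y => Hb.isSymmetric x y
  have symmd : ∀ x y : H, ⟪d x, y⟫ = ⟪x, d y⟫ := fun x y => Hd.isSymmetric x y
  -- ‖b x‖ = ‖d x‖
  have hinner2 : ∀ x : H, ⟪b x, b x⟫ = ⟪d x, d x⟫ := by
    intro x
    rw [symmb, symmd]
    have h1 : b (b x) = (b * b) x := rfl
    have h2 : d (d x) = (d * d) x := rfl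
    rw [h1, h2, hbb, pow_two]
  have hnorm : ∀ x : H, ‖b x‖ = ‖d x‖ := by
    intro x
    have h3 : ‖b x‖ ^ 2 = ‖d x‖ ^ 2 := by
      rw [← inner_self_eq_norm_sq (𝕜 := ℂ), ← inner_self_eq_norm_sq (𝕜 := ℂ), hinner2]
    rw [← Real.sqrt_sq (norm_nonneg (b x)), ← Real.sqrt_sq (norm_nonneg (d x)), h3]
  have hker : ∀ x : H, b x = 0 ↔ d x = 0 := by
    intro x
    rw [← norm_eq_zero, ← norm_eq_zero (a := d x), hnorm]
  -- the kernel of b as a submodule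
  set N : Submodule ℂ H := LinearMap.ker (b : H →ₗ[ℂ] H) with hNdef
  have hNmem : ∀ v : N, b (v : H) = 0 := fun v => v.2
  have hNd : ∀ v : N, d (v : H) = 0 := fun v => (hker _).mp (hNmem v)
  have horthbN : ∀ (x : H) (v : N), ⟪b x, (v : H)⟫ = 0 := fun x v => by
    rw [symmb, hNmem, inner_zero_right]
  have horthdN : ∀ (x : H) (v : N), ⟪d x, (v : H)⟫ = 0 := fun x v => by
    rw [symmd, hNd, inner_zero_right]
  -- the two coprod maps
  set ψ : H × N →ₗ[ℂ] H := LinearMap.coprod (b : H →ₗ[ℂ] H) N.subtype with hψdef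
  set g : H × N →ₗ[ℂ] H := LinearMap.coprod (d : H →ₗ[ℂ] H) N.subtype with hgdef
  have hψ : ∀ w : H × N, ψ w = b w.1 + (w.2 : H) := fun w => rfl
  have hg : ∀ w : H × N, g w = d w.1 + (w.2 : H) := fun w => rfl
  have hkerψ : LinearMap.ker ψ ≤ LinearMap.ker g := by
    rintro ⟨x, v⟩ hxv
    rw [LinearMap.mem_ker] at hxv ⊢
    rw [hψ] at hxv
    rw [hg]
    have hbx : b x = -(v : H) := eq_neg_of_add_eq_zero_left hxv
    have hbbx : b (b x) = 0 := by rw [hbx, map_neg, hNmem, neg_zero]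
    have h0 : ⟪b x, b x⟫ = 0 := by rw [symmb, hbbx, inner_zero_right]
    have hbx0 : b x = 0 := inner_self_eq_zero.mp h0
    have hv0 : (v : H) = 0 := by rw [hbx0] at hbx; exact neg_eq_zero.mp hbx.symm
    rw [(hker x).mp hbx0, hv0, add_zero]
  have hiso : ∀ w : H × N, ‖g w‖ = ‖ψ w‖ := by
    intro w
    rw [hg, hψ]
    have e1 := norm_add_sq (𝕜 := ℂ) (d w.1) (w.2 : H)
    have e2 := norm_add_sq (𝕜 := ℂ) (b w.1) (w.2 : H)
    rw [horthdN] at e1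
    rw [horthbN, hnorm] at e2
    have h3 : ‖d w.1 + (w.2 : H)‖ ^ 2 = ‖b w.1 + (w.2 : H)‖ ^ 2 := e1.trans e2.symm
    rw [← Real.sqrt_sq (norm_nonneg (d w.1 + (w.2 : H))),
      ← Real.sqrt_sq (norm_nonneg (b w.1 + (w.2 : H))), h3]
  -- the dense subspace and the isometry on it
  set D : Submodule ℂ H := LinearMap.range ψ with hDdef
  set f₀ : D →ₗ[ℂ] H :=
    (Submodule.liftQ (LinearMap.ker ψ) g hkerψ).comp ψ.quotKerEquivRange.symm.toLinearMap
    with hf₀def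
  have hf₀ : ∀ w : H × N, f₀ ⟨ψ w, LinearMap.mem_range_self ψ w⟩ = g w := by
    intro w
    rw [hf₀def]
    simp only [LinearMap.comp_apply, LinearEquiv.coe_toLinearMap]
    rw [LinearMap.quotKerEquivRange_symm_apply_image]
    rfl
  have hnormf₀ : ∀ u : D, ‖f₀ u‖ = ‖(u : H)‖ := by
    rintro ⟨y, hy⟩
    obtain ⟨w, rfl⟩ := hy
    rw [hf₀ w]
    exact hiso w
  -- the continuous version
  set f1 : D →L[ℂ] H := f₀.mkContinuous 1 (fun u => by rw [hnormf₀, one_mul]; exact le_rfl) with hf1def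
  have hf1 : ∀ u : D, f1 u = f₀ u := fun u => rfl
  -- density of D
  have hdense : Dense (D : Set H) := by
    rw [Submodule.dense_iff_topologicalClosure_eq_top,
      Submodule.topologicalClosure_eq_top_iff, Submodule.eq_bot_iff]
    intro x hx
    rw [Submodule.mem_orthogonal] at hx
    have hbx : b x = 0 := by
      have h1 : ∀ y : H, ⟪y, b x⟫ = 0 := by
        intro y
        rw [← symmb]
        exact hx (b y) ⟨(y, 0), by rw [hψ]; simp⟩
      have := h1 (b x)
      rwa [inner_self_eq_zero] at this
    have hxD : x ∈ D := ⟨(0, ⟨x, hbx⟩), by rw [hψ]; simp⟩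
    have := hx x hxD
    rwa [inner_self_eq_zero] at this
  have hdr : DenseRange (D.subtypeL) := by
    have hr : Set.range (D.subtypeL) = (D : Set H) := Subtype.range_coe
    rw [DenseRange, hr]
    exact hdense
  have hui : IsUniformInducing (D.subtypeL) := isometry_subtype_coe.isUniformInducing
  -- the operator k
  set k : H →L[ℂ] H := f1.extend D.subtypeL with hkdef
  have hkD : ∀ u : D, k (u : H) = f1 u := fun u =>
    ContinuousLinearMap.extend_eq (f := f1) (e := D.subtypeL) hdr hui u
  have hkw : ∀ (x : H) (v : N), k (b x + (v : H)) = d x + (v : H) := by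
    intro x v
    have hmem : b x + (v : H) ∈ D := ⟨(x, v), (hψ (x, v)).symm ▸ rfl⟩
    have h1 : k (b x + (v : H)) = f1 ⟨b x + (v : H), hmem⟩ := hkD ⟨b x + (v : H), hmem⟩
    rw [h1, hf1]
    have h2 : (⟨b x + (v : H), hmem⟩ : D) = ⟨ψ (x, v), LinearMap.mem_range_self ψ (x, v)⟩ := by
      apply Subtype.ext
      show b x + (v : H) = ψ (x, v)
      exact (hψ (x, v)).symm
    rw [h2, hf₀, hg]
  -- the density extension principle
  have hext : ∀ T S : H →L[ℂ] H,
      (∀ (x : H) (v : N), T (b x + (v : H)) = S (b x + (v : H))) → T = S := by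
    intro T S h
    apply ContinuousLinearMap.coeFn_injective
    refine Continuous.ext_on hdense T.continuous S.continuous ?_
    rintro y ⟨w, rfl⟩
    rw [hψ]
    exact h w.1 w.2
  have hkN : ∀ v : N, k (v : H) = (v : H) := by
    intro v
    have := hkw 0 v
    simpa using this
  -- the operator identities
  have A1 : k * b = d := by
    ext x
    show k (b x) = d x
    have := hkw x 0
    simpa using this
  have A2 : b * k = d := by
    apply hext
    intro x v
    show b (k (b x + (v : H))) = d (b x + (v : H))
    rw [hkw]
    rw [map_add, map_add, hNmem, hNd, add_zero, add_zero]
    show (b * d) x = (d * b) x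
    rw [hcomm_db.eq]
  have A3 : k * d = d * k := by
    conv_lhs => rw [← A2]
    conv_rhs => rw [← A1]
    rw [← mul_assoc, mul_assoc]
  have A4 : k * d = b := by
    apply hext
    intro x v
    show k (d (b x + (v : H))) = b (b x + (v : H))
    rw [map_add, hNd, add_zero, map_add, hNmem, add_zero]
    have h1 : d (b x) = b (d x) := by
      show (d * b) x = (b * d) x
      rw [hcomm_db.eq]
    rw [h1]
    have h2 : k (b (d x)) = d (d x) := by
      have := hkw (d x) 0
      simpa using this
    rw [h2]
    show (d * d) x = (b * b) x
    rw [hbb, pow_two]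
  have A5 : k ^ 2 = 1 := by
    rw [pow_two]
    apply hext
    intro x v
    show k (k (b x + (v : H))) = (1 : H →L[ℂ] H) (b x + (v : H))
    rw [hkw, map_add, hkN]
    have h1 : k (d x) = b x := by
      show (k * d) x = b x
      rw [A4]
    rw [h1]
    rfl
  -- selfadjointness of k
  have hstep : ∀ (x : H) (u : N) (y : H) (v : N),
      ⟪k (b x + (u : H)), b y + (v : H)⟫ = ⟪b x + (u : H), k (b y + (v : H))⟫ := by
    intro x u y v
    rw [hkw, hkw]
    simp only [inner_add_left, inner_add_right]
    have h1 : ⟪d x, (v : H)⟫ = 0 := horthdN x v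
    have h2 : ⟪(u : H), b y⟫ = 0 := by
      rw [← symmb, hNmem, inner_zero_left]
    have h3 : ⟪d x, b y⟫ = ⟪b x, d y⟫ := by
      rw [symmd]
      have : d (b y) = b (d y) := by
        show (d * b) y = (b * d) y
        rw [hcomm_db.eq]
      rw [this, ← symmb]
    have h4 : ⟪b x, (v : H)⟫ = 0 := horthbN x v
    have h5 : ⟪(u : H), d y⟫ = 0 := by
      rw [← symmd, hNd, inner_zero_left]
    rw [h1, h2, h3, h4, h5]
  have hsym : ∀ x y : H, ⟪k x, y⟫ = ⟪x, k y⟫ := by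
    have step1 : ∀ u₀ ∈ (D : Set H), ∀ y : H, ⟪k u₀, y⟫ = ⟪u₀, k y⟫ := by
      rintro u₀ ⟨w1, rfl⟩ y
      have hfun : (fun z : H => (⟪k (ψ w1), z⟫ : ℂ)) = fun z : H => ⟪ψ w1, k z⟫ := by
        refine Continuous.ext_on hdense ?_ ?_ ?_
        · exact Continuous.inner continuous_const continuous_id
        · exact Continuous.inner continuous_const k.continuous
        · rintro z ⟨w2, rfl⟩
          rw [hψ w1, hψ w2]
          exact hstep w1.1 w1.2 w2.1 w2.2
      exact congrFun hfun y
    intro x y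
    have hfun : (fun z : H => (⟪k z, y⟫ : ℂ)) = fun z : H => ⟪z, k y⟫ := by
      refine Continuous.ext_on hdense ?_ ?_ ?_
      · exact Continuous.inner (k.continuous) continuous_const
      · exact Continuous.inner continuous_id continuous_const
      · intro z hz
        exact step1 z hz y
    exact congrFun hfun x
  have hksa : IsSelfAdjoint k :=
    ContinuousLinearMap.isSelfAdjoint_iff_isSymmetric.mpr (fun x y => hsym x y)
  -- final assembly
  refine ⟨k, hksa, A5, A3, A2.symm, A1.symm, ?_, ?_⟩
  · -- e = c ^ 2 * p + b * k + s ^ 2 * q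
    rw [A2, hc2, hs2]
    have hA : (p * e * p + q * (1 - e) * q) * p = p * e * p := by
      rw [add_mul, mul_assoc (p * e) p p, hpp, mul_assoc (q * (1 - e)) q p, hqp,
        mul_zero, add_zero]
    have hB : (p * (1 - e) * p + q * e * q) * q = q * e * q := by
      rw [add_mul, mul_assoc (p * (1 - e)) p q, hpq, mul_zero, zero_add,
        mul_assoc (q * e) q q, hqq]
    rw [hA, hB, hd, hq]
    noncomm_ring
  · -- b * (p * k - k * q) = 0
    have h7 : p * d = d * q := by
      rw [hd]
      simp only [mul_add, add_mul, mul_assoc, l1, l2, l3, l4, hpq, hqp, hpp, hqq,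
        mul_zero, zero_mul, add_zero, zero_add]
    rw [mul_sub, ← mul_assoc, ← hcomm_pb.eq, mul_assoc, A2, ← mul_assoc, A2, h7, sub_self]
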